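/- Let X, Y be real Banach spaces and F : B_X → B_Y a bijective non-expansive map such that for every v ∈ F⁻¹(S_Y) and every t ∈ [−1, 1] one has F(t·v) = t·F(v). Then F is an isometry: ‖F(u) − F(v)‖ = ‖u − v‖ for all u, v ∈ B_X. -/

import Mathlib

open Metric Set Filter Topology MeasureTheory

theorem nonexpansive_bijection_isometry_of_homogeneous_on_sphere_preimage
    {X Y : Type*} [NormedAddCommGroup X] [NormedSpace ℝ X] [CompleteSpace X]
    [NormedAddCommGroup Y] [NormedSpace ℝ Y] [CompleteSpace Y]
    (F : Metric.closedBall (0 : X) 1 → Metric.closedBall (0 : Y) 1)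
    (hbij : Function.Bijective F)
    (hne : ∀ u v : Metric.closedBall (0 : X) 1,
      ‖(F u : Y) - (F v : Y)‖ ≤ ‖(u : X) - (v : X)‖)
    (hhom : ∀ v : Metric.closedBall (0 : X) 1, ‖(F v : Y)‖ = 1 →
      ∀ t ∈ Set.Icc (-1 : ℝ) 1, ∀ (htv : t • (v : X) ∈ Metric.closedBall (0 : X) 1),
        (F ⟨t • (v : X), htv⟩ : Y) = t • (F v : Y)) :
    ∀ u v : Metric.closedBall (0 : X) 1,
      ‖(F u : Y) - (F v : Y)‖ = ‖(u : X) - (v : X)‖ := by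
  classical
  have memB : ∀ {x : X}, x ∈ Metric.closedBall (0 : X) 1 ↔ ‖x‖ ≤ 1 := fun {x} => by
    rw [Metric.mem_closedBall, dist_zero_right]
  have memBY : ∀ {y : Y}, y ∈ Metric.closedBall (0 : Y) 1 ↔ ‖y‖ ≤ 1 := fun {y} => by
    rw [Metric.mem_closedBall, dist_zero_right]
  have hBcoe : ∀ x : Metric.closedBall (0 : X) 1, ‖(x : X)‖ ≤ 1 := fun x => memB.mp x.2
  have hBYcoe : ∀ y : Metric.closedBall (0 : Y) 1, ‖(y : Y)‖ ≤ 1 := fun y => memBY.mp y.2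
  intro u v
  by_cases huv : (u : X) = (v : X)
  · rw [Subtype.ext huv, sub_self, sub_self, norm_zero, norm_zero]
  have hFne : (F u : Y) ≠ (F v : Y) := by
    intro h
    exact huv (congrArg Subtype.val (hbij.1 (Subtype.ext h)))
  have hdne : (F u : Y) - (F v : Y) ≠ 0 := sub_ne_zero.mpr hFne
  -- a point whose image lies on the unit sphere of `Y`
  obtain ⟨v₀, hv₀⟩ := hbij.2 ⟨‖(F u : Y) - (F v : Y)‖⁻¹ • ((F u : Y) - (F v : Y)),
    memBY.mpr (le_of_eq (norm_smul_inv_norm (𝕜 := ℝ) hdne))⟩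
  have hv₀n : ‖(F v₀ : Y)‖ = 1 := by
    rw [hv₀]
    exact norm_smul_inv_norm (𝕜 := ℝ) hdne
  have h0B : (0 : X) ∈ Metric.closedBall (0 : X) 1 := memB.mpr (by simp)
  -- F sends 0 to 0
  have hF0 : (F ⟨0, h0B⟩ : Y) = 0 := by
    have h0' : (0 : ℝ) • (v₀ : X) ∈ Metric.closedBall (0 : X) 1 := by
      rw [zero_smul]; exact h0B
    have h := hhom v₀ hv₀n 0 (by constructor <;> norm_num) h0'
    have heq : (⟨(0 : ℝ) • (v₀ : X), h0'⟩ : Metric.closedBall (0 : X) 1) = ⟨0, h0B⟩ :=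
      Subtype.ext (zero_smul ℝ _)
    rw [heq] at h
    rw [h, zero_smul]
  -- every point of the ball is a multiple of a point whose image is on the sphere
  have hdec : ∀ x : Metric.closedBall (0 : X) 1, ∃ t : ℝ, ∃ w : Metric.closedBall (0 : X) 1,
      0 ≤ t ∧ t ≤ 1 ∧ ‖(F w : Y)‖ = 1 ∧ (x : X) = t • (w : X) ∧ (F x : Y) = t • (F w : Y) := by
    intro x
    by_cases hx : (F x : Y) = 0
    · have hx0 : x = ⟨0, h0B⟩ := hbij.1 (Subtype.ext (by rw [hx, hF0]))
      exact ⟨0, v₀, le_refl 0, zero_le_one, hv₀n, by rw [hx0, zero_smul],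
        by rw [hx, zero_smul]⟩
    · have htpos : 0 < ‖(F x : Y)‖ := norm_pos_iff.mpr hx
      have htle : ‖(F x : Y)‖ ≤ 1 := hBYcoe (F x)
      have hyh : ‖‖(F x : Y)‖⁻¹ • (F x : Y)‖ = 1 := norm_smul_inv_norm (𝕜 := ℝ) hx
      obtain ⟨w, hw⟩ := hbij.2 ⟨‖(F x : Y)‖⁻¹ • (F x : Y), memBY.mpr hyh.le⟩
      have hwn : ‖(F w : Y)‖ = 1 := by rw [hw]; exact hyh
      have hmem : ‖(F x : Y)‖ • (w : X) ∈ Metric.closedBall (0 : X) 1 := memB.mpr (by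
        rw [norm_smul, Real.norm_eq_abs, abs_of_nonneg htpos.le]
        calc ‖(F x : Y)‖ * ‖(w : X)‖ ≤ ‖(F x : Y)‖ * 1 :=
              mul_le_mul_of_nonneg_left (hBcoe w) htpos.le
          _ ≤ 1 := by rw [mul_one]; exact htle)
      have hFt := hhom w hwn ‖(F x : Y)‖ ⟨by linarith, htle⟩ hmem
      have hFx : F ⟨‖(F x : Y)‖ • (w : X), hmem⟩ = F x := by
        apply Subtype.ext
        rw [hFt, hw]
        show ‖(F x : Y)‖ • (‖(F x : Y)‖⁻¹ • (F x : Y)) = (F x : Y)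
        rw [smul_smul, mul_inv_cancel₀ htpos.ne', one_smul]
      have hxw := hbij.1 hFx
      refine ⟨‖(F x : Y)‖, w, htpos.le, htle, hwn, ?_, ?_⟩
      · exact congrArg Subtype.val hxw.symm
      · rw [hw]
        show (F x : Y) = ‖(F x : Y)‖ • (‖(F x : Y)‖⁻¹ • (F x : Y))
        rw [smul_smul, mul_inv_cancel₀ htpos.ne', one_smul]
  -- full homogeneity of F
  have hhomall : ∀ (x : Metric.closedBall (0 : X) 1) (t : ℝ), -1 ≤ t → t ≤ 1 →
      ∀ (h : t • (x : X) ∈ Metric.closedBall (0 : X) 1),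
        (F ⟨t • (x : X), h⟩ : Y) = t • (F x : Y) := by
    intro x t ht1 ht2 h
    obtain ⟨s, w, hs0, hs1, hwn, hxw, hFxw⟩ := hdec x
    have habs : |t * s| ≤ 1 := by
      rw [abs_mul]
      have h1 : |t| ≤ 1 := abs_le.mpr ⟨ht1, ht2⟩
      have h2 : |s| ≤ 1 := by rw [abs_of_nonneg hs0]; exact hs1
      calc |t| * |s| ≤ 1 * 1 := mul_le_mul h1 h2 (abs_nonneg _) zero_le_one
        _ = 1 := one_mul 1
    have hmem : (t * s) • (w : X) ∈ Metric.closedBall (0 : X) 1 := by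
      rw [← smul_smul, ← hxw]; exact h
    have heq : (⟨t • (x : X), h⟩ : Metric.closedBall (0 : X) 1)
        = ⟨(t * s) • (w : X), hmem⟩ := Subtype.ext (by
      show t • (x : X) = (t * s) • (w : X)
      rw [hxw, smul_smul])
    rw [heq, hhom w hwn (t * s) (abs_le.mp habs) hmem, hFxw, smul_smul]
  -- preimages of sphere points lie on the sphere
  have hsph : ∀ w : Metric.closedBall (0 : X) 1, ‖(F w : Y)‖ = 1 → ‖(w : X)‖ = 1 := by
    intro w hw
    have hmem : (-1 : ℝ) • (w : X) ∈ Metric.closedBall (0 : X) 1 := memB.mpr (by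
      rw [norm_smul, Real.norm_eq_abs]
      simpa using hBcoe w)
    have hFm := hhomall w (-1) (le_refl _) (by norm_num) hmem
    have h2 : (2 : ℝ) ≤ ‖(w : X) - (-1 : ℝ) • (w : X)‖ := by
      have hh := hne w ⟨(-1 : ℝ) • (w : X), hmem⟩
      rw [hFm] at hh
      have hl : ‖(F w : Y) - (-1 : ℝ) • (F w : Y)‖ = 2 := by
        rw [neg_one_smul, sub_neg_eq_add, ← two_smul ℝ, norm_smul, hw]
        norm_num
      rw [hl] at hh
      exact hh
    have hr : ‖(w : X) - (-1 : ℝ) • (w : X)‖ = 2 * ‖(w : X)‖ := by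
      rw [neg_one_smul, sub_neg_eq_add, ← two_smul ℝ, norm_smul]
      norm_num
    have hb := hBcoe w
    rw [hr] at h2
    linarith
  -- F preserves norms
  have hnormF : ∀ x : Metric.closedBall (0 : X) 1, ‖(F x : Y)‖ = ‖(x : X)‖ := by
    intro x
    obtain ⟨t, w, ht0, _, hwn, hxw, hFxw⟩ := hdec x
    rw [hFxw, hxw, norm_smul, norm_smul, hwn, hsph w hwn]
  -- the main inequality
  refine le_antisymm (hne u v) ?_
  by_contra hcon
  push_neg at hcon
  set z : X := (u : X) - (v : X) with hzdef
  have hz : z ≠ 0 := sub_ne_zero.mpr huv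
  have hznorm : (0 : ℝ) < ‖z‖ := norm_pos_iff.mpr hz
  set T : ℝ × ℝ → X := fun p => p.1 • (u : X) + p.2 • (v : X) with hTdef
  have hTsub : ∀ p q : ℝ × ℝ, T p - T q = T (p - q) := by
    intro p q
    simp only [hTdef, Prod.fst_sub, Prod.snd_sub, sub_smul]
    abel
  have hTnorm : ∀ p : ℝ × ℝ, ‖T p‖ ≤ 2 * ‖p‖ := by
    intro p
    calc ‖p.1 • (u : X) + p.2 • (v : X)‖
        ≤ ‖p.1 • (u : X)‖ + ‖p.2 • (v : X)‖ := norm_add_le _ _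
      _ ≤ ‖p‖ * 1 + ‖p‖ * 1 := by
          apply add_le_add
          · rw [norm_smul]
            exact mul_le_mul (norm_fst_le p) (hBcoe u) (norm_nonneg _) (norm_nonneg _)
          · rw [norm_smul]
            exact mul_le_mul (norm_snd_le p) (hBcoe v) (norm_nonneg _) (norm_nonneg _)
      _ = 2 * ‖p‖ := by ring
  set NN : ℝ × ℝ → ℝ := fun p => ‖T p‖ with hNNdef
  have hNNlip : LipschitzWith 2 NN := by
    apply LipschitzWith.of_dist_le_mul
    intro p q
    have hh : |NN p - NN q| ≤ 2 * ‖p - q‖ := by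
      calc |NN p - NN q| ≤ ‖T p - T q‖ := abs_norm_sub_norm_le _ _
        _ = ‖T (p - q)‖ := by rw [hTsub]
        _ ≤ 2 * ‖p - q‖ := hTnorm _
    simpa [Real.dist_eq, dist_eq_norm] using hh
  have hrad : ∀ᵐ p : ℝ × ℝ ∂volume, DifferentiableAt ℝ NN p :=
    hNNlip.ae_differentiableAt (μ := volume)
  set D : ℝ := ‖(F u : Y) - (F v : Y)‖ with hDdef
  set δ : ℝ := ‖z‖ - D with hδdef
  have hδpos : 0 < δ := sub_pos.mpr hcon
  set η : ℝ := min (8 : ℝ)⁻¹ (δ / (8 * ‖z‖)) with hηdef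
  have hηpos : 0 < η := lt_min (by norm_num) (div_pos hδpos (by positivity))
  have hηle : η ≤ (8 : ℝ)⁻¹ := min_le_left _ _
  set q₀ : ℝ × ℝ := ((2 * ‖z‖)⁻¹, -(2 * ‖z‖)⁻¹) with hq₀def
  obtain ⟨p₀, hp₀ball, hp₀diff⟩ : ∃ p₀ ∈ Metric.ball q₀ (η / 2), DifferentiableAt ℝ NN p₀ := by
    by_contra hno
    push_neg at hno
    have h1 : Metric.ball q₀ (η / 2) ⊆ {p : ℝ × ℝ | ¬DifferentiableAt ℝ NN p} :=
      fun p hp => hno p hp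
    have h2 : volume {p : ℝ × ℝ | ¬DifferentiableAt ℝ NN p} = 0 := ae_iff.mp hrad
    have h3 := measure_mono (μ := volume) h1
    rw [h2] at h3
    exact absurd (le_antisymm h3 zero_le)
      (measure_ball_pos volume q₀ (by positivity : (0:ℝ) < η / 2)).ne'
  set w : X := T p₀ with hwdef
  have hNN0 : NN p₀ = ‖w‖ := rfl
  have hp₀q₀ : ‖p₀ - q₀‖ ≤ η / 2 := by
    have hh := Metric.mem_ball.mp hp₀ball
    rw [dist_eq_norm] at hh
    exact hh.le
  have hTq₀' : T q₀ = (2 * ‖z‖)⁻¹ • z := by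
    simp only [hTdef, hq₀def, hzdef]
    module
  have hwz : ‖w - (2 * ‖z‖)⁻¹ • z‖ ≤ η := by
    rw [hwdef, ← hTq₀', hTsub]
    calc ‖T (p₀ - q₀)‖ ≤ 2 * ‖p₀ - q₀‖ := hTnorm _
      _ ≤ 2 * (η / 2) := by linarith
      _ = η := by ring
  have hhalf : ‖(2 * ‖z‖)⁻¹ • z‖ = 2⁻¹ := by
    rw [norm_smul, Real.norm_eq_abs, abs_of_pos (by positivity)]
    field_simp
  have hwub' : ‖w‖ ≤ 2⁻¹ + η := by
    have hca : w - (2 * ‖z‖)⁻¹ • z + (2 * ‖z‖)⁻¹ • z = w := by abel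
    have h := norm_add_le (w - (2 * ‖z‖)⁻¹ • z) ((2 * ‖z‖)⁻¹ • z)
    rw [hca, hhalf] at h
    linarith
  have hwlb : 2⁻¹ - η ≤ ‖w‖ := by
    have h := norm_sub_norm_le ((2 * ‖z‖)⁻¹ • z) w
    rw [hhalf, norm_sub_rev] at h
    linarith
  have h8lt : (8:ℝ)⁻¹ < 2⁻¹ := by norm_num
  have h281 : (2:ℝ)⁻¹ + 8⁻¹ ≤ 1 := by norm_num
  have hwpos : (0 : ℝ) < ‖w‖ := by linarith
  have hwub : ‖w‖ ≤ 1 := by linarith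
  have hwB : w ∈ Metric.closedBall (0 : X) 1 := memB.mpr hwub
  have hFW : ‖(F ⟨w, hwB⟩ : Y)‖ = ‖w‖ := hnormF ⟨w, hwB⟩
  have hFWne : (F ⟨w, hwB⟩ : Y) ≠ 0 := by
    intro h
    rw [h, norm_zero] at hFW
    exact hwpos.ne hFW
  obtain ⟨g, hgnorm, hgFW⟩ := exists_dual_vector ℝ (F ⟨w, hwB⟩ : Y) (norm_ne_zero_iff.mpr hFWne)
  have hgFW' : g ((F ⟨w, hwB⟩ : Y)) = ‖w‖ := by
    rw [hgFW, hFW]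
    norm_num
  have hgle : ∀ y : Y, g y ≤ ‖y‖ := by
    intro y
    calc g y ≤ |g y| := le_abs_self _
      _ = ‖g y‖ := (Real.norm_eq_abs _).symm
      _ ≤ ‖g‖ * ‖y‖ := g.le_opNorm y
      _ = ‖y‖ := by rw [hgnorm, one_mul]
  set L := fderiv ℝ NN p₀ with hLdef
  have hslope : ∀ p : ℝ × ℝ,
      Tendsto (fun ε : ℝ => (NN (p₀ + ε • p) - NN p₀) / ε) (𝓝[>] (0 : ℝ)) (𝓝 (L p)) := by
    intro p
    have h1 : HasDerivAt (fun ε : ℝ => p₀ + ε • p) p 0 := by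
      simpa using ((hasDerivAt_id (0 : ℝ)).smul_const p).const_add p₀
    have h2' : HasFDerivAt NN L ((fun ε : ℝ => p₀ + ε • p) 0) := by
      simpa using hp₀diff.hasFDerivAt
    have h3 := h2'.comp_hasDerivAt 0 h1
    have h4 := hasDerivAt_iff_tendsto_slope.mp h3
    have h5 : Tendsto (slope (fun ε : ℝ => NN (p₀ + ε • p)) 0) (𝓝[>] (0 : ℝ)) (𝓝 (L p)) :=
      h4.mono_left (nhdsWithin_mono 0 (fun x hx => ne_of_gt hx))
    refine Tendsto.congr' ?_ h5
    filter_upwards [self_mem_nhdsWithin] with ε hε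
    rw [slope_def_field]
    simp
  have hkey : ∀ (p : ℝ × ℝ) (x : Metric.closedBall (0 : X) 1), (x : X) = T p →
      g ((F x : Y)) ≤ L p := by
    intro p x hxp
    refine ge_of_tendsto (hslope p) ?_
    filter_upwards [Ioc_mem_nhdsGT zero_lt_one] with ε hε
    obtain ⟨hε0, hε1⟩ := hε
    have hmemε : ε • (x : X) ∈ Metric.closedBall (0 : X) 1 := memB.mpr (by
      rw [norm_smul, Real.norm_eq_abs, abs_of_pos hε0]
      calc ε * ‖(x : X)‖ ≤ 1 * 1 := mul_le_mul hε1 (hBcoe x) (norm_nonneg _) zero_le_one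
        _ = 1 := one_mul 1)
    have hFε : (F ⟨ε • (x : X), hmemε⟩ : Y) = ε • (F x : Y) :=
      hhomall x ε (by linarith) hε1 hmemε
    have hmemw : (-1 : ℝ) • w ∈ Metric.closedBall (0 : X) 1 := memB.mpr (by
      rw [norm_smul, Real.norm_eq_abs]
      simpa using hwub)
    have hFmw : (F ⟨(-1 : ℝ) • w, hmemw⟩ : Y) = (-1 : ℝ) • (F ⟨w, hwB⟩ : Y) :=
      hhomall ⟨w, hwB⟩ (-1) (le_refl _) (by norm_num) hmemw
    have hchain : g ((F ⟨ε • (x : X), hmemε⟩ : Y)) - g ((F ⟨(-1 : ℝ) • w, hmemw⟩ : Y))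
        ≤ ‖ε • (x : X) + w‖ := by
      rw [← g.map_sub]
      calc g ((F ⟨ε • (x : X), hmemε⟩ : Y) - (F ⟨(-1 : ℝ) • w, hmemw⟩ : Y))
          ≤ ‖(F ⟨ε • (x : X), hmemε⟩ : Y) - (F ⟨(-1 : ℝ) • w, hmemw⟩ : Y)‖ := hgle _
        _ ≤ ‖ε • (x : X) - (-1 : ℝ) • w‖ := hne _ _
        _ = ‖ε • (x : X) + w‖ := by rw [neg_one_smul, sub_neg_eq_add]
    rw [hFε, hFmw] at hchain
    have hgv1 : g (ε • (F x : Y)) = ε * g ((F x : Y)) := by rw [g.map_smul, smul_eq_mul]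
    have hgv2 : g ((-1 : ℝ) • (F ⟨w, hwB⟩ : Y)) = -‖w‖ := by
      rw [g.map_smul, smul_eq_mul, hgFW']; ring
    rw [hgv1, hgv2] at hchain
    have hNNval : NN (p₀ + ε • p) = ‖ε • (x : X) + w‖ := by
      have hTval : T (p₀ + ε • p) = ε • (x : X) + w := by
        rw [hxp, hwdef]
        simp only [hTdef, Prod.fst_add, Prod.snd_add, Prod.smul_fst, Prod.smul_snd,
          smul_eq_mul]
        module
      simp only [hNNdef]
      rw [hTval]
    show g ((F x : Y)) ≤ (NN (p₀ + ε • p) - NN p₀) / ε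
    rw [le_div_iff₀ hε0, hNNval, hNN0]
    linarith
  have hmu : ((u : X)) = T (1, 0) := by simp [hTdef]
  have hmv : ((v : X)) = T (0, 1) := by simp [hTdef]
  have h1 : g ((F u : Y)) ≤ L (1, 0) := hkey (1, 0) u hmu
  have h2 : g ((F v : Y)) ≤ L (0, 1) := hkey (0, 1) v hmv
  have hmemnu : (-1 : ℝ) • (u : X) ∈ Metric.closedBall (0 : X) 1 := memB.mpr (by
    rw [norm_smul, Real.norm_eq_abs]
    simpa using hBcoe u)
  have hFnu : (F ⟨(-1 : ℝ) • (u : X), hmemnu⟩ : Y) = (-1 : ℝ) • (F u : Y) :=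
    hhomall u (-1) (le_refl _) (by norm_num) hmemnu
  have h3 : g ((F ⟨(-1 : ℝ) • (u : X), hmemnu⟩ : Y)) ≤ L (-1, 0) := by
    apply hkey (-1, 0)
    show (-1 : ℝ) • (u : X) = T (-1, 0)
    simp [hTdef]
  have h3' : -(g ((F u : Y))) ≤ L (-1, 0) := by
    rw [hFnu, g.map_smul, smul_eq_mul] at h3
    linarith
  have hL1 : L (-1, 0) = -L (1, 0) := by
    have hpe : ((-1 : ℝ), (0 : ℝ)) = -((1 : ℝ), (0 : ℝ)) := by
      rw [Prod.ext_iff]; norm_num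
    rw [hpe, L.map_neg]
  have hgu : L (1, 0) ≤ g ((F u : Y)) := by
    rw [hL1] at h3'
    linarith
  have hDlb : L (1, 0) - L (0, 1) ≤ D := by
    have hgsub : g ((F u : Y) - (F v : Y)) ≤ D := hgle _
    rw [g.map_sub] at hgsub
    linarith
  have heuler : L p₀ = ‖w‖ := by
    have hconst : (fun ε : ℝ => (NN (p₀ + ε • p₀) - NN p₀) / ε) =ᶠ[𝓝[>] (0 : ℝ)]
        (fun _ => ‖w‖) := by
      filter_upwards [Ioc_mem_nhdsGT zero_lt_one] with ε hε
      have hT1 : T (p₀ + ε • p₀) = (1 + ε) • T p₀ := by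
        simp only [hTdef, Prod.fst_add, Prod.snd_add, Prod.smul_fst, Prod.smul_snd,
          smul_eq_mul]
        module
      have hNv : NN (p₀ + ε • p₀) = (1 + ε) * ‖w‖ := by
        simp only [hNNdef]
        rw [hT1, norm_smul, Real.norm_eq_abs, abs_of_pos (by linarith [hε.1]), ← hwdef]
      show (NN (p₀ + ε • p₀) - NN p₀) / ε = ‖w‖
      rw [hNv, hNN0, div_eq_iff hε.1.ne']
      ring
    have h2c : Tendsto (fun ε : ℝ => (NN (p₀ + ε • p₀) - NN p₀) / ε) (𝓝[>] (0 : ℝ))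
        (𝓝 ‖w‖) := Tendsto.congr' hconst.symm tendsto_const_nhds
    exact tendsto_nhds_unique (hslope p₀) h2c
  have hLbound : ∀ r : ℝ × ℝ, L r ≤ ‖T r‖ := by
    intro r
    refine le_of_tendsto (hslope r) ?_
    filter_upwards [Ioc_mem_nhdsGT zero_lt_one] with ε hε
    have h1b : NN (p₀ + ε • r) ≤ NN p₀ + ε * ‖T r‖ := by
      have hTv : T (p₀ + ε • r) = T p₀ + ε • T r := by
        simp only [hTdef, Prod.fst_add, Prod.snd_add, Prod.smul_fst, Prod.smul_snd,
          smul_eq_mul]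
        module
      simp only [hNNdef]
      rw [hTv]
      calc ‖T p₀ + ε • T r‖ ≤ ‖T p₀‖ + ‖ε • T r‖ := norm_add_le _ _
        _ = ‖T p₀‖ + ε * ‖T r‖ := by
            rw [norm_smul, Real.norm_eq_abs, abs_of_pos hε.1]
    show (NN (p₀ + ε • r) - NN p₀) / ε ≤ ‖T r‖
    rw [div_le_iff₀ hε.1]
    linarith
  have hLlb : ∀ r : ℝ × ℝ, -‖T r‖ ≤ L r := by
    intro r
    have hh := hLbound (-r)
    rw [L.map_neg] at hh
    have hTr : ‖T (-r)‖ = ‖T r‖ := by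
      have : T (-r) = -(T r) := by
        simp only [hTdef, Prod.fst_neg, Prod.snd_neg, neg_smul]
        abel
      rw [this, norm_neg]
    rw [hTr] at hh
    linarith
  have hsplit : L (1, -1) = L (1, 0) - L (0, 1) := by
    have hpe : ((1 : ℝ), (-1 : ℝ)) = ((1 : ℝ), (0 : ℝ)) - ((0 : ℝ), (1 : ℝ)) := by
      rw [Prod.ext_iff]; norm_num
    rw [hpe, L.map_sub]
  have hq₀eq : ((1 : ℝ), (-1 : ℝ)) = (2 * ‖z‖) • q₀ := by
    rw [hq₀def, Prod.ext_iff]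
    constructor
    · show (1 : ℝ) = (2 * ‖z‖) * (2 * ‖z‖)⁻¹
      rw [mul_inv_cancel₀ (by positivity)]
    · show (-1 : ℝ) = (2 * ‖z‖) * -(2 * ‖z‖)⁻¹
      rw [mul_neg, mul_inv_cancel₀ (by positivity)]
  have hscale : L (1, -1) = (2 * ‖z‖) * L q₀ := by
    rw [hq₀eq, L.map_smul, smul_eq_mul]
  have hq₀L : 2⁻¹ - 2 * η ≤ L q₀ := by
    have hsplit2 : L q₀ = L p₀ - L (p₀ - q₀) := by
      rw [← L.map_sub]
      congr 1
      abel
    have hTb : ‖T (p₀ - q₀)‖ ≤ η := by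
      calc ‖T (p₀ - q₀)‖ ≤ 2 * ‖p₀ - q₀‖ := hTnorm _
        _ ≤ 2 * (η / 2) := by linarith
        _ = η := by ring
    have hub := hLbound (p₀ - q₀)
    rw [hsplit2, heuler]
    have : L (p₀ - q₀) ≤ η := le_trans hub hTb
    linarith [hwlb]
  have hfinal : ‖z‖ - 4 * ‖z‖ * η ≤ D := by
    have h6 : (2 * ‖z‖) * (2⁻¹ - 2 * η) ≤ (2 * ‖z‖) * L q₀ :=
      mul_le_mul_of_nonneg_left hq₀L (by positivity)
    calc ‖z‖ - 4 * ‖z‖ * η = (2 * ‖z‖) * (2⁻¹ - 2 * η) := by ring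
      _ ≤ (2 * ‖z‖) * L q₀ := h6
      _ = L (1, -1) := hscale.symm
      _ = L (1, 0) - L (0, 1) := hsplit
      _ ≤ D := hDlb
  have hηb : 4 * ‖z‖ * η ≤ δ / 2 := by
    have h7 : η ≤ δ / (8 * ‖z‖) := min_le_right _ _
    calc 4 * ‖z‖ * η ≤ 4 * ‖z‖ * (δ / (8 * ‖z‖)) := by
          apply mul_le_mul_of_nonneg_left h7 (by positivity)
      _ = δ / 2 := by
          field_simp
          ring
  linarith [hδpos, hfinal, hηb]
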